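/- Let T be a tree with at least two vertices and let s be a real number. Then 0 is an eigenvalue of the deformed Laplacian matrix M_T(s) if and only if s = 1 or s = −1. -/

import Mathlib

open Filter Topology

/-- The deformed Laplacian matrix `M_G(s) = I - s·A + s²·(D - I)` of a finite simple graph. -/
noncomputable def defLap {V : Type*} [Fintype V] [DecidableEq V] (G : SimpleGraph V) (s : ℝ) :
    Matrix V V ℝ :=
  letI := Classical.decRel G.Adj
  (1 : Matrix V V ℝ) - s • (G.adjMatrix ℝ) +
    s ^ 2 • (Matrix.diagonal (fun v => (G.degree v : ℝ)) - 1)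

/-- The largest (real) eigenvalue of a matrix. -/
noncomputable def lamMax {V : Type*} [Fintype V] (M : Matrix V V ℝ) : ℝ :=
  sSup {μ : ℝ | ∃ v : V → ℝ, v ≠ 0 ∧ M.mulVec v = μ • v}

private noncomputable def cdeg {V : Type*} [Fintype V] (G : SimpleGraph V) (v : V) : ℕ :=
  letI := Classical.decRel G.Adj
  G.degree v

private lemma cdeg_eq_natCard {V : Type*} [Fintype V] (G : SimpleGraph V) (v : V) :
    cdeg G v = Nat.card (G.neighborSet v) := by
  unfold cdeg
  letI := Classical.decRel G.Adj
  rw [← SimpleGraph.card_neighborSet_eq_degree, Nat.card_eq_fintype_card]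

private lemma cdeg_eq {V : Type*} [Fintype V] (G : SimpleGraph V) [DecidableRel G.Adj] (v : V) :
    cdeg G v = G.degree v := by
  rw [cdeg_eq_natCard, ← SimpleGraph.card_neighborSet_eq_degree, Nat.card_eq_fintype_card]

private lemma defLap_apply_self {V : Type*} [Fintype V] [DecidableEq V] (G : SimpleGraph V)
    (s : ℝ) (x : V) :
    defLap G s x x = 1 + s ^ 2 * ((cdeg G x : ℝ) - 1) := by
  letI := Classical.decRel G.Adj
  simp [defLap, cdeg_eq, G.irrefl, Matrix.one_apply]

private lemma defLap_apply_adj {V : Type*} [Fintype V] [DecidableEq V] {G : SimpleGraph V}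
    (s : ℝ) {x y : V} (h : G.Adj x y) :
    defLap G s x y = -s := by
  letI := Classical.decRel G.Adj
  simp [defLap, Matrix.one_apply, h, h.ne, Matrix.diagonal_apply_ne _ h.ne]

private lemma defLap_apply_nonadj {V : Type*} [Fintype V] [DecidableEq V] {G : SimpleGraph V}
    (s : ℝ) {x y : V} (hne : x ≠ y) (h : ¬ G.Adj x y) :
    defLap G s x y = 0 := by
  letI := Classical.decRel G.Adj
  simp [defLap, Matrix.one_apply, h, hne, Matrix.diagonal_apply_ne _ hne]

private lemma exists_leaf {V : Type*} [Fintype V] [DecidableEq V] (T : SimpleGraph V)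
    (hT : T.IsTree) (hcard : 2 ≤ Fintype.card V) :
    ∃ u w : V, T.Adj u w ∧ ∀ x, T.Adj u x → x = w := by
  letI := Classical.decRel T.Adj
  have hpos : ∀ v : V, 0 < T.degree v := by
    intro v
    rw [SimpleGraph.degree_pos_iff_exists_adj]
    obtain ⟨y, hy⟩ := Fintype.exists_ne_of_one_lt_card (by omega) v
    obtain ⟨p⟩ := hT.isConnected.preconnected v y
    cases p with
    | nil => exact absurd rfl hy.symm
    | cons h _ => exact ⟨_, h⟩
  have hsum : ∑ v : V, T.degree v = 2 * (Fintype.card V - 1) := by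
    rw [SimpleGraph.sum_degrees_eq_twice_card_edges]
    have := hT.card_edgeFinset
    omega
  have hexists : ∃ u : V, T.degree u = 1 := by
    by_contra hc
    push_neg at hc
    have h2 : ∀ v : V, 2 ≤ T.degree v := by
      intro v
      have := hpos v
      have := hc v
      omega
    have : 2 * Fintype.card V ≤ ∑ v : V, T.degree v := by
      calc 2 * Fintype.card V = ∑ _v : V, 2 := by
            simp [Finset.sum_const, mul_comm]
        _ ≤ ∑ v : V, T.degree v := Finset.sum_le_sum fun v _ => h2 v
    omega
  obtain ⟨u, hu⟩ := hexists
  obtain ⟨w, hw⟩ := Finset.card_eq_one.mp hu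
  refine ⟨u, w, ?_, ?_⟩
  · have : w ∈ T.neighborFinset u := by rw [hw]; exact Finset.mem_singleton_self w
    rwa [SimpleGraph.mem_neighborFinset] at this
  · intro x hx
    have : x ∈ T.neighborFinset u := (SimpleGraph.mem_neighborFinset _ _ _).mpr hx
    rwa [hw, Finset.mem_singleton] at this

private lemma path_avoids {V : Type*} {T : SimpleGraph V} {u w : V}
    (huniq : ∀ x, T.Adj u x → x = w) :
    ∀ {x v : V} (p : T.Walk x v), p.IsPath → x ≠ u → v ≠ u → u ∉ p.support := by
  intro x v p
  induction p with
  | nil =>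
    intro _ hx _
    simp [Ne.symm hx]
  | @cons a b c h q ih =>
    intro hp hx hv
    rw [SimpleGraph.Walk.support_cons, List.mem_cons]
    push_neg
    refine ⟨Ne.symm hx, ?_⟩
    by_cases hb : b = u
    · subst hb
      cases q with
      | nil => exact absurd rfl hv
      | @cons _ z _ h' q' =>
        exfalso
        have hxw : a = w := huniq a h.symm
        have hzw : z = w := huniq z h'
        have haz : a = z := hxw.trans hzw.symm
        have : a ∈ (SimpleGraph.Walk.cons h' q').support := by
          rw [SimpleGraph.Walk.support_cons, haz]
          exact List.mem_cons_of_mem _ (SimpleGraph.Walk.start_mem_support q')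
        rw [SimpleGraph.Walk.cons_isPath_iff] at hp
        exact hp.2 this
    · exact ih hp.of_cons hb hv

private lemma induce_isTree {V : Type*} [Fintype V] [DecidableEq V] {T : SimpleGraph V}
    (hT : T.IsTree) {u w : V} (hadj : T.Adj u w) (huniq : ∀ x, T.Adj u x → x = w) :
    (T.induce {y : V | y ≠ u}).IsTree := by
  have hwu : w ≠ u := fun h => T.irrefl (h ▸ hadj)
  constructor
  · apply T.induce_connected_of_patches w hwu
    intro v hv
    obtain ⟨p, hp, -⟩ := hT.existsUnique_path w v
    have hsub : {x : V | x ∈ p.support} ⊆ {y : V | y ≠ u} := by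
      intro x hx
      intro hxe
      exact (path_avoids huniq p hp hwu hv) (hxe ▸ hx)
    exact ⟨{x : V | x ∈ p.support}, hsub, p.start_mem_support, p.end_mem_support,
      (p.connected_induce_support).preconnected _ _⟩
  · intro v c hc
    exact hT.IsAcyclic ((c.map (SimpleGraph.Embedding.induce _).toHom))
      (hc.map Subtype.val_injective)

private lemma cdeg_singleton {V : Type*} [Fintype V] {G : SimpleGraph V} {u w : V}
    (hadj : G.Adj u w) (huniq : ∀ x, G.Adj u x → x = w) : cdeg G u = 1 := by
  rw [cdeg_eq_natCard]
  have : G.neighborSet u = {w} := by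
    ext x
    exact ⟨fun hx => huniq x hx, fun hx => hx ▸ hadj⟩
  rw [this, Nat.card_coe_set_eq, Set.ncard_singleton]

private lemma cdeg_induce_natCard {V : Type*} [Fintype V] [DecidableEq V] (G : SimpleGraph V)
    (u : V) (x : ↥({y : V | y ≠ u})) :
    cdeg (G.induce {y : V | y ≠ u}) x = (G.neighborSet x.val \ {u}).ncard := by
  rw [cdeg_eq_natCard, ← Nat.card_coe_set_eq]
  apply Nat.card_congr
  exact ⟨fun z => ⟨z.val.val, z.prop, z.val.prop⟩,
    fun z => ⟨⟨z.val, z.prop.2⟩, z.prop.1⟩, fun z => rfl, fun z => rfl⟩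

private lemma cdeg_induce_adj {V : Type*} [Fintype V] [DecidableEq V] {G : SimpleGraph V}
    {u : V} (x : ↥({y : V | y ≠ u})) (h : G.Adj x.val u) :
    (cdeg (G.induce {y : V | y ≠ u}) x : ℝ) = (cdeg G x.val : ℝ) - 1 := by
  rw [cdeg_induce_natCard, cdeg_eq_natCard, Nat.card_coe_set_eq]
  have hmem : u ∈ G.neighborSet x.val := h
  rw [Set.ncard_diff_singleton_of_mem hmem]
  have hpos : 1 ≤ (G.neighborSet x.val).ncard :=
    (Set.ncard_pos (Set.toFinite _)).mpr ⟨u, hmem⟩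
  push_cast [Nat.cast_sub hpos]
  ring

private lemma cdeg_induce_nonadj {V : Type*} [Fintype V] [DecidableEq V] {G : SimpleGraph V}
    {u : V} (x : ↥({y : V | y ≠ u})) (h : ¬ G.Adj x.val u) :
    cdeg (G.induce {y : V | y ≠ u}) x = cdeg G x.val := by
  rw [cdeg_induce_natCard, cdeg_eq_natCard, Nat.card_coe_set_eq]
  congr 1
  exact Set.diff_singleton_eq_self h

private def leafEquiv {V : Type*} [DecidableEq V] (u : V) :
    (Unit ⊕ ↥({y : V | y ≠ u})) ≃ V where
  toFun := Sum.elim (fun _ => u) Subtype.val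
  invFun x := if h : x = u then Sum.inl () else Sum.inr ⟨x, h⟩
  left_inv z := by
    cases z with
    | inl _ => simp
    | inr x =>
      simp only [Sum.elim_inr]
      simp [show (x : V) ≠ u from x.prop]
  right_inv x := by by_cases h : x = u <;> simp [h]

private lemma det_defLap_base {V : Type*} [Fintype V] [DecidableEq V] (T : SimpleGraph V)
    (hT : T.IsTree) (h2 : Fintype.card V = 2) (s : ℝ) : (defLap T s).det = 1 - s ^ 2 := by
  have h2' : Nat.card V = 2 := by rw [Nat.card_eq_fintype_card, h2]
  obtain ⟨a, b, hab, huniv⟩ := Nat.card_eq_two_iff.mp h2'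
  have hmem : ∀ x : V, x = a ∨ x = b := by
    intro x
    have : x ∈ ({a, b} : Set V) := huniv ▸ Set.mem_univ x
    simpa using this
  have hadj : T.Adj a b := by
    obtain ⟨p⟩ := hT.isConnected.preconnected a b
    cases p with
    | nil => exact absurd rfl hab
    | @cons _ c _ h p' =>
      rcases hmem c with rfl | rfl
      · exact absurd rfl h.ne
      · exact h
  have huniq_a : ∀ x, T.Adj a x → x = b := by
    intro x hx
    rcases hmem x with rfl | rfl
    · exact absurd rfl hx.ne'
    · rfl
  have huniq_b : ∀ x, T.Adj b x → x = a := by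
    intro x hx
    rcases hmem x with rfl | rfl
    · rfl
    · exact absurd rfl hx.ne'
  have hdega : cdeg T a = 1 := cdeg_singleton hadj huniq_a
  have hdegb : cdeg T b = 1 := cdeg_singleton hadj.symm huniq_b
  let e : Fin 2 ≃ V :=
    ⟨![a, b], fun x => if x = a then 0 else 1,
      by intro i; fin_cases i <;> simp [hab.symm],
      by
        intro x
        rcases hmem x with rfl | rfl
        · simp
        · simp [Ne.symm hab]⟩
  rw [← Matrix.det_submatrix_equiv_self e, Matrix.det_fin_two]
  simp only [Matrix.submatrix_apply]
  show defLap T s a a * defLap T s b b - defLap T s a b * defLap T s b a = 1 - s ^ 2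
  rw [defLap_apply_self, defLap_apply_self, defLap_apply_adj s hadj, defLap_apply_adj s hadj.symm,
    hdega, hdegb]
  push_cast
  ring

private lemma det_defLap_tree : ∀ (n : ℕ) {V : Type u_1} [Fintype V] [DecidableEq V]
    (T : SimpleGraph V), T.IsTree → Fintype.card V = n + 2 → ∀ s : ℝ,
    (defLap T s).det = 1 - s ^ 2 := by
  intro n
  induction n with
  | zero =>
    intro V _ _ T hT hc s
    exact det_defLap_base T hT hc s
  | succ n ih =>
    intro V _ _ T hT hc s
    obtain ⟨u, w, hadj, huniq⟩ := exists_leaf T hT (by omega)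
    have hwu : w ≠ u := fun h => T.irrefl (h ▸ hadj)
    have hT' : (T.induce {y : V | y ≠ u}).IsTree := induce_isTree hT hadj huniq
    have hcardS : Fintype.card ↥({y : V | y ≠ u}) = n + 2 := by
      have h1 : Fintype.card ↥({y : V | y ≠ u}) = Fintype.card {y : V // ¬ y = u} := rfl
      rw [h1, Fintype.card_subtype_compl, Fintype.card_subtype_eq, hc]
      omega
    have hdegu : cdeg T u = 1 := cdeg_singleton hadj huniq
    set e := leafEquiv u with he
    set N := (defLap T s).submatrix e e with hN
    have hA : N.toBlocks₁₁ = 1 := by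
      ext i j
      have : N (Sum.inl i) (Sum.inl j) = defLap T s u u := rfl
      rw [Matrix.toBlocks₁₁, Matrix.of_apply, this, defLap_apply_self, hdegu]
      have : (1 : Matrix Unit Unit ℝ) i j = 1 := by
        rw [Subsingleton.elim i j, Matrix.one_apply_eq]
      rw [this]
      norm_num
    have key : N.toBlocks₂₂ - N.toBlocks₂₁ * N.toBlocks₁₂
        = defLap (T.induce {y : V | y ≠ u}) s := by
      ext x y
      have hxu : (x : V) ≠ u := x.prop
      have hyu : (y : V) ≠ u := y.prop
      have hLHS : (N.toBlocks₂₂ - N.toBlocks₂₁ * N.toBlocks₁₂) x y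
          = defLap T s x y - defLap T s x u * defLap T s u y := by
        simp [hN, Matrix.toBlocks₂₂, Matrix.toBlocks₂₁, Matrix.toBlocks₁₂, Matrix.mul_apply,
          Matrix.sub_apply, he, leafEquiv]
      rw [hLHS]
      by_cases hxy : x = y
      · subst hxy
        rw [defLap_apply_self, defLap_apply_self]
        by_cases hxadj : T.Adj (x : V) u
        · have hxw : (x : V) = w := huniq _ hxadj.symm
          rw [defLap_apply_adj s hxadj, defLap_apply_adj s hxadj.symm, cdeg_induce_adj x hxadj]
          ring
        · rw [defLap_apply_nonadj s hxu hxadj, cdeg_induce_nonadj x hxadj]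
          ring
      · have hvxy : (x : V) ≠ (y : V) := fun h => hxy (Subtype.ext h)
        have hcross : defLap T s x u * defLap T s u y = 0 := by
          by_cases h1 : T.Adj (x : V) u
          · by_cases h2 : T.Adj u (y : V)
            · exact absurd ((huniq _ h1.symm).trans (huniq _ h2).symm) hvxy
            · rw [defLap_apply_nonadj s (Ne.symm hyu) h2, mul_zero]
          · rw [defLap_apply_nonadj s hxu h1, zero_mul]
        rw [hcross, sub_zero]
        by_cases hadjxy : T.Adj (x : V) (y : V)
        · rw [defLap_apply_adj s hadjxy,
            defLap_apply_adj s (show (T.induce {y : V | y ≠ u}).Adj x y from hadjxy)]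
        · rw [defLap_apply_nonadj s hvxy hadjxy,
            defLap_apply_nonadj s hxy (show ¬ (T.induce {y : V | y ≠ u}).Adj x y from hadjxy)]
    calc (defLap T s).det = N.det := (Matrix.det_submatrix_equiv_self e (defLap T s)).symm
      _ = (Matrix.fromBlocks N.toBlocks₁₁ N.toBlocks₁₂ N.toBlocks₂₁ N.toBlocks₂₂).det := by
          rw [Matrix.fromBlocks_toBlocks]
      _ = (Matrix.fromBlocks 1 N.toBlocks₁₂ N.toBlocks₂₁ N.toBlocks₂₂).det := by rw [hA]
      _ = (N.toBlocks₂₂ - N.toBlocks₂₁ * N.toBlocks₁₂).det := by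
          rw [Matrix.det_fromBlocks_one₁₁]
      _ = 1 - s ^ 2 := by rw [key]; exact ih (T.induce {y : V | y ≠ u}) hT' hcardS s

/-- for a tree `T` with at least two vertices and a real `s`,
`0` is an eigenvalue of `M_T(s)` if and only if `s = 1` or `s = −1`. -/
theorem stmt7 {V : Type*} [Fintype V] [DecidableEq V] (T : SimpleGraph V)
    (hT : T.IsTree) (hcard : 2 ≤ Fintype.card V) (s : ℝ) :
    (∃ v : V → ℝ, v ≠ 0 ∧ (defLap T s).mulVec v = 0) ↔ s = 1 ∨ s = -1 := by
  have hdet : (defLap T s).det = 1 - s ^ 2 :=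
    det_defLap_tree (Fintype.card V - 2) T hT (by omega) s
  rw [Matrix.exists_mulVec_eq_zero_iff, hdet]
  constructor
  · intro h
    have h0 : (s - 1) * (s + 1) = 0 := by nlinarith [h]
    rcases mul_eq_zero.mp h0 with h1 | h1
    · left; linarith
    · right; linarith
  · rintro (rfl | rfl) <;> ring
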